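/- Let 1 ≤ d < ω, let κ be a regular cardinal, and let 0 < σ < κ. Assume SDHL(d,σ,κ) holds. Let ⟨T_i : i < d⟩ be a sequence of regular κ-trees, let c : ⊗_{i<d} T_i → σ be a coloring, and let A ⊆ κ be cofinal in κ. Then there exist ordinals α < β < κ, both belonging to A, nodes ⟨t_i ∈ T_i(α) : i < d⟩, and sets ⟨X_i ⊆ T_i(β) : i < d⟩ such that each X_i dominates T_i(α+1) ∩ Cone(t_i) and c is constant on ⊗_{i<d} X_i. -/

import Mathlib

open Cardinal Set

/-- A node of `^{<κ}κ`: a function from an ordinal `len < κ` into the ordinals `< κ`,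
normalized to take value `0` at or beyond its length (so that equality of nodes is
extensional). -/
structure SeqNode (κ : Cardinal.{0}) : Type 1 where
  len : Ordinal.{0}
  len_lt : len < κ.ord
  val : Ordinal.{0} → Ordinal.{0}
  val_lt : ∀ β < len, val β < κ.ord
  val_eq_zero : ∀ β, len ≤ β → val β = 0

namespace SeqNode

variable {κ : Cardinal.{0}}

/-- `s.Init t` means `s ⊑ t`, i.e. `s` is an initial segment of `t`. -/
def Init (s t : SeqNode κ) : Prop :=
  s.len ≤ t.len ∧ ∀ β < s.len, s.val β = t.val β

/-- The restriction `t ↾ β` of `t` to length `min β t.len`. -/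
noncomputable def restrict (t : SeqNode κ) (β : Ordinal.{0}) : SeqNode κ where
  len := min β t.len
  len_lt := lt_of_le_of_lt (min_le_right _ _) t.len_lt
  val := fun γ => if γ < min β t.len then t.val γ else 0
  val_lt := fun γ hγ => by
    rw [if_pos hγ]
    exact t.val_lt γ (lt_of_lt_of_le hγ (min_le_right _ _))
  val_eq_zero := fun γ hγ => by
    rw [if_neg (not_lt.mpr hγ)]

end SeqNode

/-- The level `T(α)`: nodes of `T` of length `α`. -/
def SeqLevel {κ : Cardinal.{0}} (T : Set (SeqNode κ)) (α : Ordinal.{0}) : Set (SeqNode κ) :=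
  {t ∈ T | t.len = α}

/-- A tree: a set of nodes closed under initial segments. -/
def IsSeqTree {κ : Cardinal.{0}} (T : Set (SeqNode κ)) : Prop :=
  ∀ t ∈ T, ∀ s : SeqNode κ, s.Init t → s ∈ T

/-- A branch of `T`: a subset of `T` linearly ordered by the initial segment relation. -/
def IsBranch {κ : Cardinal.{0}} (T b : Set (SeqNode κ)) : Prop :=
  b ⊆ T ∧ ∀ s ∈ b, ∀ t ∈ b, s.Init t ∨ t.Init s

/-- A maximal branch of `T`. -/
def IsMaximalBranch {κ : Cardinal.{0}} (T b : Set (SeqNode κ)) : Prop :=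
  IsBranch T b ∧ ∀ b' : Set (SeqNode κ), IsBranch T b' → b ⊆ b' → b' = b

/-- `T` is perfect: every node has two incomparable extensions in `T`. -/
def IsPerfect {κ : Cardinal.{0}} (T : Set (SeqNode κ)) : Prop :=
  ∀ t ∈ T, ∃ s ∈ T, ∃ u ∈ T, t.Init s ∧ t.Init u ∧ ¬ s.Init u ∧ ¬ u.Init s

/-- `T ⊆ ^{<κ}κ` is a regular tree of height `η`: it is a tree all of whose nodes
have length `< η`, it has nonempty levels of cardinality `< η.card` at every `α < η`,
every maximal branch meets every level `< η`, and it is perfect. -/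
def IsRegularTreeIn (κ : Cardinal.{0}) (η : Ordinal.{0}) (T : Set (SeqNode κ)) : Prop :=
  IsSeqTree T ∧
  (∀ t ∈ T, t.len < η) ∧
  (∀ α < η, (SeqLevel T α).Nonempty) ∧
  (∀ α < η, Cardinal.mk ↥(SeqLevel T α) < Cardinal.lift.{1} η.card) ∧
  (∀ b : Set (SeqNode κ), IsMaximalBranch T b → ∀ α < η, ∃ t ∈ b, t.len = α) ∧
  IsPerfect T

/-- A regular `κ`-tree. -/
def IsRegularTree (κ : Cardinal.{0}) (T : Set (SeqNode κ)) : Prop :=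
  IsRegularTreeIn κ κ.ord T

/-- The truncation `T ∩ ^{<α}κ` of `T` below level `α`. -/
def TreeTrunc {κ : Cardinal.{0}} (T : Set (SeqNode κ)) (α : Ordinal.{0}) : Set (SeqNode κ) :=
  {t ∈ T | t.len < α}

/-- The level product `⊗_{i<d} X_i`: tuples all of whose entries lie on one common level. -/
def LevelProd {κ : Cardinal.{0}} {d : ℕ} (X : Fin d → Set (SeqNode κ)) :
    Set (Fin d → SeqNode κ) :=
  {x | ∃ α : Ordinal.{0}, ∀ i, x i ∈ X i ∧ (x i).len = α}

/-- `X` dominates `Y`: every element of `Y` has an extension in `X`. -/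
def Dominates {κ : Cardinal.{0}} (X Y : Set (SeqNode κ)) : Prop :=
  ∀ y ∈ Y, ∃ x ∈ X, SeqNode.Init y x

/-- `Cone t`: all extensions of `t`. -/
def Cone {κ : Cardinal.{0}} (t : SeqNode κ) : Set (SeqNode κ) :=
  {s : SeqNode κ | t.Init s}

/-- `X` is a somewhere dense level matrix for trees `T` of height `η`. -/
def IsSDMatrixIn {κ : Cardinal.{0}} (η : Ordinal.{0}) {d : ℕ}
    (T X : Fin d → Set (SeqNode κ)) : Prop :=
  ∃ α β : Ordinal.{0}, α < β ∧ β < η ∧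
    ∃ t : Fin d → SeqNode κ,
      (∀ i, t i ∈ SeqLevel (T i) α) ∧
      ∀ i, X i ⊆ SeqLevel (T i) β ∧
        Dominates (X i) (SeqLevel (T i) (α + 1) ∩ Cone (t i))

/-- `X` is a somewhere dense level matrix for the regular `κ`-trees `T`. -/
def IsSDMatrix (κ : Cardinal.{0}) {d : ℕ} (T X : Fin d → Set (SeqNode κ)) : Prop :=
  IsSDMatrixIn κ.ord T X

/-- The coloring `c` is constant (monochromatic) on the level product of `X`. -/
def MonoOn {κ : Cardinal.{0}} {d : ℕ} (c : (Fin d → SeqNode κ) → Ordinal.{0})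
    (X : Fin d → Set (SeqNode κ)) : Prop :=
  ∀ x ∈ LevelProd X, ∀ y ∈ LevelProd X, c x = c y

/-- The somewhere dense Halpern–Läuchli theorem `SDHL(d,σ,κ)`. -/
def SDHL (d : ℕ) (σ κ : Cardinal.{0}) : Prop :=
  ∀ T : Fin d → Set (SeqNode κ), (∀ i, IsRegularTree κ (T i)) →
    ∀ c : (Fin d → SeqNode κ) → Ordinal.{0},
      (∀ x ∈ LevelProd T, c x < σ.ord) →
      ∃ X : Fin d → Set (SeqNode κ), (∀ i, X i ⊆ T i) ∧
        IsSDMatrix κ T X ∧ MonoOn c X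

/-- `s` is an immediate successor of `t`. -/
def IsImmediateSucc {κ : Cardinal.{0}} (t s : SeqNode κ) : Prop :=
  t.Init s ∧ s.len = t.len + 1

/-- `A` is a cofinal subset of (the ordinals below) `η`. -/
def CofinalIn (A : Set Ordinal.{0}) (η : Ordinal.{0}) : Prop :=
  A ⊆ Set.Iio η ∧ ∀ β < η, ∃ α ∈ A, β ≤ α

/-- `T'` is a strong subtree of the regular `κ`-tree `T` witnessed by the cofinal set
`A ⊆ κ` of splitting levels. -/
def IsStrongSubtree (κ : Cardinal.{0}) (T' T : Set (SeqNode κ)) (A : Set Ordinal.{0}) : Prop :=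
  T' ⊆ T ∧ IsRegularTree κ T' ∧ CofinalIn A κ.ord ∧
    ∀ t ∈ T',
      (t.len ∈ A → ∀ s ∈ T, IsImmediateSucc t s → s ∈ T') ∧
      (t.len ∉ A → ∃! s : SeqNode κ, s ∈ T' ∧ IsImmediateSucc t s)

/-- The strong tree Halpern–Läuchli theorem `HL(d,σ,κ)`. -/
def HL (d : ℕ) (σ κ : Cardinal.{0}) : Prop :=
  ∀ T : Fin d → Set (SeqNode κ), (∀ i, IsRegularTree κ (T i)) →
    ∀ c : (Fin d → SeqNode κ) → Ordinal.{0},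
      (∀ x ∈ LevelProd T, c x < σ.ord) →
      ∃ T' : Fin d → Set (SeqNode κ), ∃ A : Set Ordinal.{0},
        (∀ i, IsStrongSubtree κ (T' i) (T i) A) ∧
        ∀ x : Fin d → SeqNode κ, (∃ α ∈ A, ∀ i, x i ∈ SeqLevel (T' i) α) →
          ∀ y : Fin d → SeqNode κ, (∃ α ∈ A, ∀ i, y i ∈ SeqLevel (T' i) α) →
            c x = c y

/-- `e` is the increasing enumeration (along the ordinals below `η`) of `A`. -/
def IsIncreasingEnum (e : Ordinal.{0} → Ordinal.{0}) (η : Ordinal.{0})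
    (A : Set Ordinal.{0}) : Prop :=
  (∀ ζ < η, e ζ ∈ A) ∧
  (∀ ζ ξ : Ordinal.{0}, ζ < ξ → ξ < η → e ζ < e ξ) ∧
  (∀ a ∈ A, ∃ ζ < η, e ζ = a)

/-- The tail cone Halpern–Läuchli theorem `HL^tc(d,<κ,κ)`. -/
def HLtc (d : ℕ) (κ : Cardinal.{0}) : Prop :=
  ∀ T : Fin d → Set (SeqNode κ), (∀ i, IsRegularTree κ (T i)) →
    ∀ σ : Ordinal.{0} → Cardinal.{0}, (∀ ζ < κ.ord, 0 < σ ζ ∧ σ ζ < κ) →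
      ∀ c : Ordinal.{0} → (Fin d → SeqNode κ) → Ordinal.{0},
        (∀ ζ < κ.ord, ∀ x ∈ LevelProd T, c ζ x < (σ ζ).ord) →
        ∃ T' : Fin d → Set (SeqNode κ), ∃ A : Set Ordinal.{0},
          ∃ e : Ordinal.{0} → Ordinal.{0},
            (∀ i, IsStrongSubtree κ (T' i) (T i) A) ∧
            IsIncreasingEnum e κ.ord A ∧
            ∀ ζ ξ : Ordinal.{0}, ζ ≤ ξ → ξ < κ.ord →
              ∀ t : Fin d → SeqNode κ, (∀ i, t i ∈ SeqLevel (T' i) (e ξ)) →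
                c ζ t = c ζ (fun i => (t i).restrict (e ζ))

/-- The modified tail cone Halpern–Läuchli theorem. -/
def HLtcMod (d : ℕ) (κ : Cardinal.{0}) : Prop :=
  ∀ T : Fin d → Set (SeqNode κ), (∀ i, IsRegularTree κ (T i)) →
    ∀ σ : Ordinal.{0} → Cardinal.{0}, (∀ ζ < κ.ord, 0 < σ ζ ∧ σ ζ < κ) →
      ∀ c : Ordinal.{0} → (Fin d → SeqNode κ) → Ordinal.{0},
        (∀ ζ < κ.ord, ∀ x ∈ LevelProd T, c ζ x < (σ ζ).ord) →
        ∃ T' : Fin d → Set (SeqNode κ), ∃ A : Set Ordinal.{0},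
          ∃ e : Ordinal.{0} → Ordinal.{0},
            (∀ i, IsStrongSubtree κ (T' i) (T i) A) ∧
            IsIncreasingEnum e κ.ord A ∧
            ∃ μ : Ordinal.{0} → Ordinal.{0},
              (∀ γ < κ.ord, γ ≤ μ γ ∧ μ γ < κ.ord) ∧
              ∀ ζ γ : Ordinal.{0}, ζ ≤ γ → γ < κ.ord →
                ∀ t : Fin d → SeqNode κ, (∀ i, t i ∈ SeqLevel (T' i) (e γ)) →
                  c (μ ζ) t = c (μ ζ) (fun i => (t i).restrict (e ζ))

/-- `κ` is strongly inaccessible: uncountable, regular, and a strong limit. -/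
def StronglyInaccessible (κ : Cardinal.{0}) : Prop :=
  ℵ₀ < κ ∧ κ.IsRegular ∧ ∀ lam : Cardinal.{0}, lam < κ → (2 : Cardinal.{0}) ^ lam < κ

/-- `C` is a club (closed unbounded) subset of the ordinals below `η`. -/
def IsClubIn (C : Set Ordinal.{0}) (η : Ordinal.{0}) : Prop :=
  C ⊆ Set.Iio η ∧ (∀ β < η, ∃ γ ∈ C, β ≤ γ) ∧
    ∀ s ⊆ C, s.Nonempty → sSup s < η → sSup s ∈ C

/-- `S` is a stationary subset of the ordinals below `η`. -/
def IsStationaryIn (S : Set Ordinal.{0}) (η : Ordinal.{0}) : Prop :=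
  ∀ C : Set Ordinal.{0}, IsClubIn C η → (S ∩ C).Nonempty

/-- `U` is an ultrafilter on the ordinals below `η`. -/
def IsUltrafilterOn (U : Set (Set Ordinal.{0})) (η : Ordinal.{0}) : Prop :=
  (∀ A ∈ U, A ⊆ Set.Iio η) ∧ Set.Iio η ∈ U ∧ (∅ : Set Ordinal.{0}) ∉ U ∧
  (∀ A ∈ U, ∀ B : Set Ordinal.{0}, A ⊆ B → B ⊆ Set.Iio η → B ∈ U) ∧
  (∀ A ∈ U, ∀ B ∈ U, A ∩ B ∈ U) ∧
  (∀ A : Set Ordinal.{0}, A ⊆ Set.Iio η → (A ∈ U ∨ Set.Iio η \ A ∈ U))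

/-- `U` is `κ`-complete: closed under intersections of fewer than `κ` of its members. -/
def IsKappaComplete (U : Set (Set Ordinal.{0})) (κ : Cardinal.{0}) : Prop :=
  ∀ s : Set (Set Ordinal.{0}), s ⊆ U → s.Nonempty →
    Cardinal.mk ↥s < Cardinal.lift.{1} κ → ⋂₀ s ∈ U

/-- `U` is nonprincipal. -/
def IsNonprincipal (U : Set (Set Ordinal.{0})) : Prop :=
  ∀ β : Ordinal.{0}, ({β} : Set Ordinal.{0}) ∉ U

/-- `U` is a normal ultrafilter on `κ`: a nonprincipal `κ`-complete ultrafilter closed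
under diagonal intersections. -/
def IsNormalUltrafilterOn (U : Set (Set Ordinal.{0})) (κ : Cardinal.{0}) : Prop :=
  IsUltrafilterOn U κ.ord ∧ IsKappaComplete U κ ∧ IsNonprincipal U ∧
    ∀ A : Ordinal.{0} → Set Ordinal.{0}, (∀ α < κ.ord, A α ∈ U) →
      {β : Ordinal.{0} | β < κ.ord ∧ ∀ α < β, β ∈ A α} ∈ U

/-- `κ` is a measurable cardinal. -/
def IsMeasurableCard (κ : Cardinal.{0}) : Prop :=
  ℵ₀ < κ ∧ ∃ U : Set (Set Ordinal.{0}),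
    IsUltrafilterOn U κ.ord ∧ IsKappaComplete U κ ∧ IsNonprincipal U

/-- The set of (ordinals which are) infinite cardinals `α < κ` with `σ < α` at which
`SDHL(d,σ,α)` holds, viewed as a set of ordinals below `κ`. -/
def SDHLset (d : ℕ) (σ κ : Cardinal.{0}) : Set Ordinal.{0} :=
  {β : Ordinal.{0} | β < κ.ord ∧ ℵ₀ ≤ β.card ∧ β.card.ord = β ∧ σ < β.card ∧
    SDHL d σ β.card}

section AuxiliaryLemmas

namespace SeqNode

variable {κ : Cardinal.{0}}

theorem eq_of_len_val {s t : SeqNode κ} (hlen : s.len = t.len)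
    (hval : ∀ β < s.len, s.val β = t.val β) : s = t := by
  obtain ⟨l, hl, v, hv, hv0⟩ := s
  obtain ⟨l', hl', v', hv', hv0'⟩ := t
  change l = l' at hlen
  change ∀ β < l, v β = v' β at hval
  subst hlen
  have hveq : v = v' := by
    funext β
    rcases lt_or_ge β l with h | h
    · exact hval β h
    · rw [hv0 β h, hv0' β h]
  subst hveq
  rfl

theorem Init.rfl (t : SeqNode κ) : t.Init t := ⟨le_rfl, fun _ _ => _root_.rfl⟩

theorem Init.trans {s t u : SeqNode κ} (h1 : s.Init t) (h2 : t.Init u) : s.Init u :=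
  ⟨h1.1.trans h2.1, fun β hβ => (h1.2 β hβ).trans (h2.2 β (hβ.trans_le h1.1))⟩

theorem Init.eq_of_le {s t : SeqNode κ} (h : s.Init t) (hle : t.len ≤ s.len) : s = t :=
  eq_of_len_val (le_antisymm h.1 hle) h.2

theorem restrict_len {t : SeqNode κ} {β : Ordinal.{0}} (h : β ≤ t.len) :
    (t.restrict β).len = β := min_eq_left h

theorem restrict_val {t : SeqNode κ} {β γ : Ordinal.{0}} (h : γ < min β t.len) :
    (t.restrict β).val γ = t.val γ := by
  show (if γ < min β t.len then t.val γ else 0) = t.val γ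
  exact if_pos h

theorem restrict_init (t : SeqNode κ) (β : Ordinal.{0}) : (t.restrict β).Init t :=
  ⟨min_le_right _ _, fun γ hγ => restrict_val hγ⟩

theorem restrict_eq_self {t : SeqNode κ} {β : Ordinal.{0}} (h : t.len ≤ β) :
    t.restrict β = t :=
  eq_of_len_val (min_eq_right h) fun γ hγ => restrict_val hγ

theorem restrict_restrict {t : SeqNode κ} {β γ : Ordinal.{0}} (h : γ ≤ β) :
    (t.restrict β).restrict γ = t.restrict γ := by
  have hlen : ((t.restrict β).restrict γ).len = (t.restrict γ).len := by
    show min γ (min β t.len) = min γ t.len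
    rw [← min_assoc, min_eq_left h]
  refine eq_of_len_val hlen ?_
  intro δ hδ
  have h1 : δ < min γ (min β t.len) := hδ
  have h3 : δ < min γ t.len := by
    have h2 := h1
    rw [← min_assoc, min_eq_left h] at h2
    exact h2
  rw [restrict_val h1, restrict_val (lt_of_lt_of_le h1 (min_le_right _ _)),
    restrict_val h3]

theorem restrict_eq_of_init {s t : SeqNode κ} (h : s.Init t) : t.restrict s.len = s := by
  refine (eq_of_len_val (restrict_len h.1).symm ?_).symm
  intro γ hγ
  rw [restrict_val (lt_min hγ (hγ.trans_le h.1))]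
  exact h.2 γ hγ

theorem init_of_init_init {s t u : SeqNode κ} (hs : s.Init u) (ht : t.Init u)
    (hle : s.len ≤ t.len) : s.Init t :=
  ⟨hle, fun β hβ => (hs.2 β hβ).trans ((ht.2 β (lt_of_lt_of_le hβ hle)).symm)⟩

end SeqNode

theorem isBranch_sUnion {κ : Cardinal.{0}} {T : Set (SeqNode κ)} {c : Set (Set (SeqNode κ))}
    (hc : ∀ b ∈ c, IsBranch T b) (hchain : IsChain (· ⊆ ·) c) : IsBranch T (⋃₀ c) := by
  constructor
  · exact Set.sUnion_subset fun b hb => (hc b hb).1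
  · rintro s ⟨bs, hbs, hsb⟩ t ⟨bt, hbt, htb⟩
    rcases eq_or_ne bs bt with rfl | hne
    · exact (hc bs hbs).2 s hsb t htb
    · rcases hchain hbs hbt hne with h | h
      · exact (hc bt hbt).2 s (h hsb) t htb
      · exact (hc bs hbs).2 s hsb t (h htb)

theorem exists_level_ext {κ : Cardinal.{0}} {T : Set (SeqNode κ)} (hT : IsRegularTree κ T)
    {b : Set (SeqNode κ)} (hb : IsBranch T b) {δ : Ordinal.{0}} (hδ : δ < κ.ord)
    (hlen : ∀ s ∈ b, s.len ≤ δ) : ∃ x ∈ T, x.len = δ ∧ ∀ s ∈ b, s.Init x := by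
  obtain ⟨m, hbm, hm⟩ :=
    zorn_subset_nonempty {b' : Set (SeqNode κ) | IsBranch T b'}
      (fun ch hchS hchain _ => ⟨⋃₀ ch, isBranch_sUnion (fun b' hb' => hchS hb') hchain,
        fun _ hs => Set.subset_sUnion_of_mem hs⟩) b hb
  have hmax : IsMaximalBranch T m :=
    ⟨hm.1, fun b' hb' hsub => Set.Subset.antisymm (hm.2 hb' hsub) hsub⟩
  obtain ⟨x, hxm, hxlen⟩ := hT.2.2.2.2.1 m hmax δ hδ
  refine ⟨x, hm.1.1 hxm, hxlen, fun s hs => ?_⟩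
  rcases hm.1.2 s (hbm hs) x hxm with h | h
  · exact h
  · have hxs : x = s := h.eq_of_le (by rw [hxlen]; exact hlen s hs)
    rw [← hxs]
    exact SeqNode.Init.rfl x

open Classical in
noncomputable def nextIn (A : Set Ordinal.{0}) (γ : Ordinal.{0}) : Ordinal.{0} :=
  if h : ∃ a ∈ A, γ ≤ a then h.choose else 0

theorem nextIn_spec {A : Set Ordinal.{0}} {γ : Ordinal.{0}} (h : ∃ a ∈ A, γ ≤ a) :
    nextIn A γ ∈ A ∧ γ ≤ nextIn A γ := by
  unfold nextIn
  rw [dif_pos h]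
  exact ⟨h.choose_spec.1, h.choose_spec.2⟩

noncomputable def enumA (A : Set Ordinal.{0}) : Ordinal.{0} → Ordinal.{0} :=
  Ordinal.lt_wf.fix fun ζ ih => nextIn A (Ordinal.bsup ζ fun ξ h => ih ξ h + 1)

theorem enumA_eq (A : Set Ordinal.{0}) (ζ : Ordinal.{0}) :
    enumA A ζ = nextIn A (Ordinal.bsup ζ fun ξ _ => enumA A ξ + 1) := by
  unfold enumA
  exact WellFounded.fix_eq _ _ _

theorem enumA_spec {A : Set Ordinal.{0}} {κ : Cardinal.{0}} (hκ : κ.IsRegular)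
    (hA : CofinalIn A κ.ord) :
    ∀ ζ, ζ < κ.ord →
      enumA A ζ ∈ A ∧ ζ ≤ enumA A ζ ∧ ∀ ξ, ξ < ζ → enumA A ξ < enumA A ζ := by
  intro ζ
  induction ζ using Ordinal.induction with
  | h ζ IH =>
    intro hζ
    have hlim := Cardinal.isSuccLimit_ord hκ.aleph0_le
    have hslt : Ordinal.bsup ζ (fun ξ _ => enumA A ξ + 1) < κ.ord := by
      refine Ordinal.bsup_lt_ord ?_ ?_
      · rw [hκ.cof_eq]
        exact Cardinal.lt_ord.1 hζ
      · intro ξ hξ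
        have h2 : enumA A ξ < κ.ord := hA.1 (IH ξ hξ (hξ.trans hζ)).1
        rw [Ordinal.add_one_eq_succ]
        exact hlim.succ_lt h2
    obtain ⟨hmem, hges⟩ := nextIn_spec (hA.2 _ hslt)
    have key : enumA A ζ = nextIn A (Ordinal.bsup ζ fun ξ _ => enumA A ξ + 1) := enumA_eq A ζ
    have hζs : ζ ≤ Ordinal.bsup ζ fun ξ _ => enumA A ξ + 1 := by
      by_contra hcon
      push_neg at hcon
      have h1 : enumA A (Ordinal.bsup ζ fun ξ _ => enumA A ξ + 1) + 1 ≤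
          Ordinal.bsup ζ fun ξ _ => enumA A ξ + 1 := Ordinal.le_bsup _ _ hcon
      have h2 := (IH _ hcon hslt).2.1
      have h3 : (Ordinal.bsup ζ fun ξ _ => enumA A ξ + 1) <
          Ordinal.bsup ζ fun ξ _ => enumA A ξ + 1 :=
        lt_of_lt_of_le (lt_of_le_of_lt h2 (by rw [Ordinal.add_one_eq_succ]; exact Order.lt_succ _)) h1
      exact absurd h3 (lt_irrefl _)
    refine ⟨by rw [key]; exact hmem, by rw [key]; exact hζs.trans hges, ?_⟩
    intro ξ hξ
    calc enumA A ξ < enumA A ξ + 1 := by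
          rw [Ordinal.add_one_eq_succ]; exact Order.lt_succ _
      _ ≤ Ordinal.bsup ζ fun ξ _ => enumA A ξ + 1 := Ordinal.le_bsup _ ξ hξ
      _ ≤ nextIn A (Ordinal.bsup ζ fun ξ _ => enumA A ξ + 1) := hges
      _ = enumA A ζ := key.symm

noncomputable def phiMap (κ : Cardinal.{0}) (code : Ordinal.{0} → SeqNode κ → Ordinal.{0})
    (hcode : ∀ δ t, code δ t < κ.ord) (e : Ordinal.{0} → Ordinal.{0})
    (t : SeqNode κ) (ζ : Ordinal.{0}) (hζ : ζ < κ.ord) : SeqNode κ where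
  len := ζ
  len_lt := hζ
  val := fun ξ => if ξ < ζ then code (e (ξ + 1)) (t.restrict (e (ξ + 1))) else 0
  val_lt := fun ξ h => by
    show (if ξ < ζ then code (e (ξ + 1)) (t.restrict (e (ξ + 1))) else 0) < κ.ord
    rw [if_pos h]
    exact hcode _ _
  val_eq_zero := fun ξ h => if_neg (not_lt.2 h)

theorem phiMap_len {κ : Cardinal.{0}} {code : Ordinal.{0} → SeqNode κ → Ordinal.{0}}
    {hcode : ∀ δ t, code δ t < κ.ord} {e : Ordinal.{0} → Ordinal.{0}}
    {t : SeqNode κ} {ζ : Ordinal.{0}} {hζ : ζ < κ.ord} :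
    (phiMap κ code hcode e t ζ hζ).len = ζ := rfl

theorem phiMap_val {κ : Cardinal.{0}} {code : Ordinal.{0} → SeqNode κ → Ordinal.{0}}
    {hcode : ∀ δ t, code δ t < κ.ord} {e : Ordinal.{0} → Ordinal.{0}}
    {t : SeqNode κ} {ζ ξ : Ordinal.{0}} {hζ : ζ < κ.ord} (h : ξ < ζ) :
    (phiMap κ code hcode e t ζ hζ).val ξ = code (e (ξ + 1)) (t.restrict (e (ξ + 1))) := by
  show (if ξ < ζ then code (e (ξ + 1)) (t.restrict (e (ξ + 1))) else 0) = _
  exact if_pos h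

theorem phiMap_init {κ : Cardinal.{0}} {code : Ordinal.{0} → SeqNode κ → Ordinal.{0}}
    {hcode : ∀ δ t, code δ t < κ.ord} {e : Ordinal.{0} → Ordinal.{0}} {t : SeqNode κ}
    {ζ' ζ : Ordinal.{0}} (h1 : ζ' < κ.ord) (h2 : ζ < κ.ord) (hle : ζ' ≤ ζ)
    (hmono : ∀ ξ, ξ < ζ' → e (ξ + 1) ≤ e ζ') :
    (phiMap κ code hcode e (t.restrict (e ζ')) ζ' h1).Init (phiMap κ code hcode e t ζ h2) := by
  refine ⟨hle, fun ξ hξ => ?_⟩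
  have hξ' : ξ < ζ' := hξ
  rw [phiMap_val hξ', phiMap_val (lt_of_lt_of_le hξ' hle),
    SeqNode.restrict_restrict (hmono ξ hξ')]

end AuxiliaryLemmas
/-- SDHL can be applied with the two levels restricted to lie in any
prescribed cofinal set `A ⊆ κ`. -/
theorem sdhl_on_cofinal_levels (d : ℕ) (hd : 1 ≤ d) (κ σ : Cardinal.{0})
    (hκ : κ.IsRegular) (hσ0 : 0 < σ) (hσκ : σ < κ) (hSDHL : SDHL d σ κ)
    (T : Fin d → Set (SeqNode κ)) (hT : ∀ i, IsRegularTree κ (T i))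
    (c : (Fin d → SeqNode κ) → Ordinal.{0}) (hc : ∀ x ∈ LevelProd T, c x < σ.ord)
    (A : Set Ordinal.{0}) (hA : CofinalIn A κ.ord) :
    ∃ α ∈ A, ∃ β ∈ A, α < β ∧
      ∃ t : Fin d → SeqNode κ, (∀ i, t i ∈ SeqLevel (T i) α) ∧
        ∃ X : Fin d → Set (SeqNode κ),
          (∀ i, X i ⊆ SeqLevel (T i) β ∧
            Dominates (X i) (SeqLevel (T i) (α + 1) ∩ Cone (t i))) ∧
          MonoOn c X := by

  classical
  have hκ0 : ℵ₀ ≤ κ := hκ.aleph0_le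
  have hlim : Order.IsSuccLimit κ.ord := Cardinal.isSuccLimit_ord hκ0
  have hord0 : (0 : Ordinal.{0}) < κ.ord := hlim.pos
  have espec := enumA_spec hκ hA
  set e := enumA A with he
  have eA : ∀ ζ, ζ < κ.ord → e ζ ∈ A := fun ζ h => (espec ζ h).1
  have eκ : ∀ ζ, ζ < κ.ord → e ζ < κ.ord := fun ζ h => hA.1 (eA ζ h)
  have ege : ∀ ζ, ζ < κ.ord → ζ ≤ e ζ := fun ζ h => (espec ζ h).2.1
  have emono : ∀ ξ ζ, ξ < ζ → ζ < κ.ord → e ξ < e ζ := fun ξ ζ h hζ => (espec ζ hζ).2.2 ξ h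
  have emonole : ∀ ξ ζ, ξ ≤ ζ → ζ < κ.ord → e ξ ≤ e ζ := by
    intro ξ ζ h hζ
    rcases h.lt_or_eq with h' | rfl
    · exact (emono ξ ζ h' hζ).le
    · exact le_rfl
  have hsucclt : ∀ ξ ζ : Ordinal.{0}, ξ < ζ → ξ + 1 ≤ ζ := fun ξ ζ h => by
    rw [Ordinal.add_one_eq_succ]; exact Order.succ_le_of_lt h
  have esucc : ∀ ξ ζ, ξ < ζ → ζ < κ.ord → e (ξ + 1) ≤ e ζ :=
    fun ξ ζ h hζ => emonole _ _ (hsucclt _ _ h) hζ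
  have hlt1 : ∀ ξ : Ordinal.{0}, ξ < ξ + 1 := fun ξ => by
    rw [Ordinal.add_one_eq_succ]; exact Order.lt_succ _
  have hsuccκ : ∀ ξ, ξ < κ.ord → ξ + 1 < κ.ord := fun ξ h => by
    rw [Ordinal.add_one_eq_succ]; exact hlim.succ_lt h
  -- basic tree facts
  have hTtree : ∀ i, IsSeqTree (T i) := fun i => (hT i).1
  have hTlen : ∀ i, ∀ t ∈ T i, t.len < κ.ord := fun i => (hT i).2.1
  have hTne : ∀ i, ∀ α < κ.ord, (SeqLevel (T i) α).Nonempty := fun i => (hT i).2.2.1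
  have hTcard := fun i => (hT i).2.2.2.1
  have hTperf : ∀ i, IsPerfect (T i) := fun i => (hT i).2.2.2.2.2
  have hrestrT : ∀ i (t : SeqNode κ), t ∈ T i → ∀ β, t.restrict β ∈ T i :=
    fun i t ht β => hTtree i t ht _ (SeqNode.restrict_init t β)
  have htext : ∀ i (t : SeqNode κ), t ∈ T i → ∀ δ, δ < κ.ord → t.len ≤ δ →
      ∃ x, x ∈ SeqLevel (T i) δ ∧ t.Init x := by
    intro i t ht δ hδ hle
    obtain ⟨x, hx1, hx2, hx3⟩ := exists_level_ext (hT i)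
      (b := {t}) ⟨Set.singleton_subset_iff.2 ht,
        by rintro s rfl u rfl; exact Or.inl (SeqNode.Init.rfl _)⟩
      hδ (by rintro s rfl; exact hle)
    exact ⟨x, ⟨hx1, hx2⟩, hx3 t rfl⟩
  -- level codes
  have hcode : ∀ (i : Fin d) (δ : Ordinal.{0}), ∃ f : SeqNode κ → Ordinal.{0},
      (∀ t, f t < κ.ord) ∧ (δ < κ.ord → Set.InjOn f (SeqLevel (T i) δ)) := by
    intro i δ
    by_cases hδ : δ < κ.ord
    · have hlt : Cardinal.mk ↥(SeqLevel (T i) δ) < Cardinal.mk ↥(Set.Iio κ.ord) := by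
        rw [Ordinal.mk_Iio_ordinal]
        exact hTcard i δ hδ
      obtain ⟨g⟩ := (Cardinal.le_def _ _).1 hlt.le
      refine ⟨fun t => if h : t ∈ SeqLevel (T i) δ then (g ⟨t, h⟩).1 else 0, ?_, ?_⟩
      · intro t
        dsimp only
        by_cases h : t ∈ SeqLevel (T i) δ
        · rw [dif_pos h]; exact (g ⟨t, h⟩).2
        · rw [dif_neg h]; exact hord0
      · intro _ s hs t ht heq
        dsimp only at heq
        rw [dif_pos hs, dif_pos ht] at heq
        have := g.injective (Subtype.ext heq)
        exact congrArg Subtype.val this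
    · exact ⟨fun _ => 0, fun _ => hord0, fun h => absurd h hδ⟩
  choose code hc1 hc2 using hcode
  -- the compressed trees
  obtain ⟨U, hUmem⟩ : ∃ U : Fin d → Set (SeqNode κ), ∀ i u, u ∈ U i ↔
      ∃ ζ, ∃ hζ : ζ < κ.ord, ∃ t, t ∈ SeqLevel (T i) (e ζ) ∧
        u = phiMap κ (code i) (hc1 i) e t ζ hζ :=
    ⟨fun i => {u | ∃ ζ, ∃ hζ : ζ < κ.ord, ∃ t, t ∈ SeqLevel (T i) (e ζ) ∧
        u = phiMap κ (code i) (hc1 i) e t ζ hζ}, fun i u => Iff.rfl⟩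
  have hUrep : ∀ i u, u ∈ U i → ∃ ζ, ∃ hζ : ζ < κ.ord, ∃ t,
      t ∈ SeqLevel (T i) (e ζ) ∧ u.len = ζ ∧ u = phiMap κ (code i) (hc1 i) e t ζ hζ := by
    intro i u hu
    obtain ⟨ζ, hζ, t, htl, rfl⟩ := (hUmem i u).1 hu
    exact ⟨ζ, hζ, t, htl, rfl, rfl⟩
  have hΦmemU : ∀ i (t : SeqNode κ) ζ (hζ : ζ < κ.ord), t ∈ SeqLevel (T i) (e ζ) →
      phiMap κ (code i) (hc1 i) e t ζ hζ ∈ SeqLevel (U i) ζ :=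
    fun i t ζ hζ ht => ⟨(hUmem i _).2 ⟨ζ, hζ, t, ht, rfl⟩, rfl⟩
  have hΦinit : ∀ i (t₀ t₁ : SeqNode κ) ζ' ζ (h1 : ζ' < κ.ord) (h2 : ζ < κ.ord),
      ζ' ≤ ζ → t₀.len = e ζ' → t₀.Init t₁ →
      (phiMap κ (code i) (hc1 i) e t₀ ζ' h1).Init (phiMap κ (code i) (hc1 i) e t₁ ζ h2) := by
    intro i t₀ t₁ ζ' ζ h1 h2 hle hlen hinit
    have heq : t₁.restrict (e ζ') = t₀ := by
      rw [← hlen]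
      exact SeqNode.restrict_eq_of_init hinit
    have hthis := phiMap_init (code := code i) (hcode := hc1 i) (e := e) (t := t₁) h1 h2 hle
      (fun ξ hξ => esucc ξ ζ' hξ h1)
    rwa [heq] at hthis
  have hUtree : ∀ i, IsSeqTree (U i) := by
    intro i u hu s hs
    obtain ⟨ζ, hζ, t, ⟨htT, htlen⟩, rfl⟩ := (hUmem i u).1 hu
    have hslen : s.len ≤ ζ := hs.1
    have hslκ : s.len < κ.ord := lt_of_le_of_lt hslen hζ
    refine (hUmem i s).2 ⟨s.len, hslκ, t.restrict (e s.len),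
      ⟨hrestrT i t htT _, SeqNode.restrict_len (by rw [htlen]; exact emonole _ _ hslen hζ)⟩, ?_⟩
    refine SeqNode.eq_of_len_val rfl ?_
    intro ξ hξ
    have hξs : ξ < s.len := hξ
    rw [hs.2 ξ hξs, phiMap_val (lt_of_lt_of_le hξs hslen), phiMap_val hξs,
      SeqNode.restrict_restrict (esucc ξ s.len hξs hslκ)]
  -- regularity of U
  have hUreg : ∀ i, IsRegularTree κ (U i) := by
    intro i
    refine ⟨hUtree i, ?_, ?_, ?_, ?_, ?_⟩
    · intro u hu
      obtain ⟨ζ, hζ, t, _, rfl⟩ := (hUmem i u).1 hu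
      exact hζ
    · intro ζ hζ
      obtain ⟨t, ht⟩ := hTne i (e ζ) (eκ ζ hζ)
      exact ⟨_, hΦmemU i t ζ hζ ht⟩
    · intro ζ hζ
      have hsub : SeqLevel (U i) ζ ⊆
          (fun t => phiMap κ (code i) (hc1 i) e t ζ hζ) '' (SeqLevel (T i) (e ζ)) := by
        rintro u ⟨hu, hulen⟩
        obtain ⟨ζ', hζ', t, htl, hlen', rfl⟩ := hUrep i u hu
        have hζeq : ζ' = ζ := by rw [← hlen', hulen]
        subst hζeq
        exact ⟨t, htl, rfl⟩
      calc Cardinal.mk ↥(SeqLevel (U i) ζ)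
          ≤ Cardinal.mk ↥((fun t => phiMap κ (code i) (hc1 i) e t ζ hζ) ''
              (SeqLevel (T i) (e ζ))) := Cardinal.mk_le_mk_of_subset hsub
        _ ≤ Cardinal.mk ↥(SeqLevel (T i) (e ζ)) := Cardinal.mk_image_le
        _ < Cardinal.lift.{1} κ.ord.card := hTcard i (e ζ) (eκ ζ hζ)
    · -- maximal branches meet every level
      intro b hb lam0 hlam0
      have hbU : b ⊆ U i := hb.1.1
      have hblin := hb.1.2
      have hbcomp : ∀ s, s ∈ b → ∀ t, t ∈ b → s.len ≤ t.len → s.Init t := by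
        intro s hs t ht hle
        rcases hblin s hs t ht with h | h
        · exact h
        · have hts : t = s := h.eq_of_le hle
          rw [hts]
          exact SeqNode.Init.rfl s
      have hbne : b.Nonempty := by
        by_contra hne
        rw [Set.not_nonempty_iff_eq_empty] at hne
        obtain ⟨t, ht⟩ := hTne i (e 0) (eκ 0 hord0)
        have hu : phiMap κ (code i) (hc1 i) e t 0 hord0 ∈ U i :=
          (hΦmemU i t 0 hord0 ht).1
        have hbr : IsBranch (U i) {phiMap κ (code i) (hc1 i) e t 0 hord0} :=
          ⟨Set.singleton_subset_iff.2 hu,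
            by rintro s rfl u rfl; exact Or.inl (SeqNode.Init.rfl _)⟩
        have heq := hb.2 _ hbr (by rw [hne]; exact Set.empty_subset _)
        rw [hne] at heq
        exact absurd heq (Set.singleton_ne_empty _)
      have hrestr : ∀ u, u ∈ b → ∀ γ, u.restrict γ ∈ b := by
        intro u hu γ
        have hmem : u.restrict γ ∈ U i := hUtree i u (hbU hu) _ (SeqNode.restrict_init u γ)
        have hbr : IsBranch (U i) (insert (u.restrict γ) b) := by
          refine ⟨Set.insert_subset_iff.2 ⟨hmem, hbU⟩, ?_⟩
          intro s hs t ht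
          rcases Set.mem_insert_iff.1 hs with rfl | hs' <;>
            rcases Set.mem_insert_iff.1 ht with h2 | ht'
          · rw [h2]; exact Or.inl (SeqNode.Init.rfl _)
          · rcases hblin u hu t ht' with h | h
            · exact Or.inl ((SeqNode.restrict_init u γ).trans h)
            · rcases le_total t.len (u.restrict γ).len with hl | hl
              · exact Or.inr (SeqNode.init_of_init_init h (SeqNode.restrict_init u γ) hl)
              · exact Or.inl (SeqNode.init_of_init_init (SeqNode.restrict_init u γ) h hl)
          · rw [h2]
            rcases hblin u hu s hs' with h | h
            · exact Or.inr ((SeqNode.restrict_init u γ).trans h)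
            · rcases le_total s.len (u.restrict γ).len with hl | hl
              · exact Or.inl (SeqNode.init_of_init_init h (SeqNode.restrict_init u γ) hl)
              · exact Or.inr (SeqNode.init_of_init_init (SeqNode.restrict_init u γ) h hl)
          · exact hblin s hs' t ht'
        have heq := hb.2 _ hbr (Set.subset_insert _ _)
        rw [← heq]
        exact Set.mem_insert _ _
      suffices hgoal : ∀ lam, lam < κ.ord → ∃ u ∈ b, u.len = lam from hgoal lam0 hlam0
      intro lam
      induction lam using Ordinal.induction with
      | h lam IH =>
        intro hlam
        by_cases hbig : ∃ v ∈ b, lam ≤ v.len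
        · obtain ⟨v, hv, hvlen⟩ := hbig
          exact ⟨v.restrict lam, hrestr v hv lam, SeqNode.restrict_len hvlen⟩
        · push_neg at hbig
          rcases Ordinal.zero_or_succ_or_isSuccLimit lam with h0 | ⟨γ, hsucc⟩ | hlimit
          · obtain ⟨v, hv⟩ := hbne
            have := hbig v hv
            rw [h0] at this
            exact absurd this (fun h => not_lt_zero h)
          · -- successor case
            have hγlam : γ < lam := by rw [← hsucc]; exact Order.lt_succ _
            obtain ⟨u, hub, hulen⟩ := IH γ hγlam (hγlam.trans hlam)
            obtain ⟨ζ, hζ, t₀, ht₀, hlenζ, hueq⟩ := hUrep i u (hbU hub)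
            have hζlam : ζ ≤ lam := by rw [← hlenζ, hulen]; exact hγlam.le
            obtain ⟨x, hx, ht₀x⟩ := htext i t₀ ht₀.1 (e lam) (eκ lam hlam)
              (by rw [ht₀.2]; exact emonole _ _ hζlam hlam)
            have huw : u.Init (phiMap κ (code i) (hc1 i) e x lam hlam) := by
              rw [hueq]
              exact hΦinit i t₀ x ζ lam hζ hlam hζlam ht₀.2 ht₀x
            have hvw : ∀ v, v ∈ b → v.Init (phiMap κ (code i) (hc1 i) e x lam hlam) := by
              intro v hv
              have hvγ : v.len ≤ u.len := by
                rw [hulen]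
                have := hbig v hv
                rw [← hsucc] at this
                exact Order.lt_succ_iff.1 this
              exact (hbcomp v hv u hub hvγ).trans huw
            have hwU : phiMap κ (code i) (hc1 i) e x lam hlam ∈ U i :=
              (hΦmemU i x lam hlam hx).1
            have hbr : IsBranch (U i) (insert (phiMap κ (code i) (hc1 i) e x lam hlam) b) := by
              refine ⟨Set.insert_subset_iff.2 ⟨hwU, hbU⟩, ?_⟩
              intro s hs t ht
              rcases Set.mem_insert_iff.1 hs with rfl | hs' <;>
                rcases Set.mem_insert_iff.1 ht with h2 | ht'
              · rw [h2]; exact Or.inl (SeqNode.Init.rfl _)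
              · exact Or.inr (hvw t ht')
              · rw [h2]; exact Or.inl (hvw s hs')
              · exact hblin s hs' t ht'
            have heq := hb.2 _ hbr (Set.subset_insert _ _)
            refine ⟨phiMap κ (code i) (hc1 i) e x lam hlam, ?_, rfl⟩
            rw [← heq]
            exact Set.mem_insert _ _
          · -- limit case
            have hchoice : ∀ ξ : Ordinal.{0}, ∃ t : SeqNode κ, ξ < lam →
                t ∈ SeqLevel (T i) (e (ξ + 1)) ∧ ∃ h : ξ + 1 < κ.ord,
                  phiMap κ (code i) (hc1 i) e t (ξ + 1) h ∈ b := by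
              intro ξ
              by_cases hξ : ξ < lam
              · have hξ1 : ξ + 1 < lam := by
                  rw [Ordinal.add_one_eq_succ]; exact hlimit.succ_lt hξ
                obtain ⟨u, hub, hulen⟩ := IH (ξ + 1) hξ1 (hξ1.trans hlam)
                obtain ⟨ζ, hζ, t₀, ht₀, hlenζ, hueq⟩ := hUrep i u (hbU hub)
                have hζeq : ζ = ξ + 1 := by rw [← hlenζ, hulen]
                subst hζeq
                refine ⟨t₀, fun _ => ⟨ht₀, hζ, ?_⟩⟩
                rw [← hueq]
                exact hub
              · obtain ⟨v, hv⟩ := hbne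
                exact ⟨v, fun h => absurd h hξ⟩
            choose tt htt using hchoice
            have hcoh : ∀ ξ ξ', ξ < ξ' → ξ' < lam → (tt ξ).Init (tt ξ') := by
              intro ξ ξ' hlt hξ'
              have hξ : ξ < lam := hlt.trans hξ'
              obtain ⟨ht1, h1, hu1⟩ := htt ξ hξ
              obtain ⟨ht2, h2, hu2⟩ := htt ξ' hξ'
              have hle1 : ξ + 1 ≤ ξ' + 1 := add_le_add_left hlt.le 1
              have hinit12 := hbcomp _ hu1 _ hu2 hle1
              have hval := hinit12.2 ξ (hlt1 ξ)
              rw [phiMap_val (hlt1 ξ), phiMap_val (lt_of_lt_of_le (hlt1 ξ) hle1),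
                SeqNode.restrict_eq_self (le_of_eq ht1.2)] at hval
              have hmem2 : (tt ξ').restrict (e (ξ + 1)) ∈ SeqLevel (T i) (e (ξ + 1)) :=
                ⟨hrestrT i _ ht2.1 _,
                  SeqNode.restrict_len (by rw [ht2.2]; exact emonole _ _ hle1 h2)⟩
              have hinj := hc2 i (e (ξ + 1)) (eκ _ h1) ht1 hmem2 hval
              rw [hinj]
              exact SeqNode.restrict_init _ _
            have hCbr : IsBranch (T i) {s | ∃ ξ, ∃ _ : ξ < lam, s = tt ξ} := by
              constructor
              · rintro s ⟨ξ, hξ, rfl⟩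
                exact (htt ξ hξ).1.1
              · rintro s ⟨ξ, hξ, rfl⟩ t ⟨ξ', hξ', rfl⟩
                rcases lt_trichotomy ξ ξ' with h | h | h
                · exact Or.inl (hcoh ξ ξ' h hξ')
                · rw [h]; exact Or.inl (SeqNode.Init.rfl _)
                · exact Or.inr (hcoh ξ' ξ h hξ)
            have hClen : ∀ s ∈ {s | ∃ ξ, ∃ _ : ξ < lam, s = tt ξ}, SeqNode.len s ≤ e lam := by
              rintro s ⟨ξ, hξ, rfl⟩
              have hξ1 : ξ + 1 < lam := by
                rw [Ordinal.add_one_eq_succ]; exact hlimit.succ_lt hξ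
              rw [(htt ξ hξ).1.2]
              exact emonole _ _ hξ1.le hlam
            obtain ⟨x, hxT, hxlen, hxext⟩ := exists_level_ext (hT i) hCbr (eκ lam hlam) hClen
            have hwU : phiMap κ (code i) (hc1 i) e x lam hlam ∈ U i :=
              (hΦmemU i x lam hlam ⟨hxT, hxlen⟩).1
            have hvw : ∀ v, v ∈ b → v.Init (phiMap κ (code i) (hc1 i) e x lam hlam) := by
              intro v hv
              have hvlen : v.len < lam := hbig v hv
              refine ⟨hvlen.le, ?_⟩
              intro ξ hξv
              have hξ : ξ < lam := lt_trans hξv hvlen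
              obtain ⟨ht1, h1, hu1⟩ := htt ξ hξ
              have hvval : v.val ξ = (phiMap κ (code i) (hc1 i) e (tt ξ) (ξ + 1) h1).val ξ := by
                rcases hblin v hv _ hu1 with h | h
                · exact h.2 ξ hξv
                · exact (h.2 ξ (hlt1 ξ)).symm
              have hx : x.restrict (e (ξ + 1)) = tt ξ := by
                have hix : (tt ξ).Init x := hxext _ ⟨ξ, hξ, rfl⟩
                have h' := SeqNode.restrict_eq_of_init hix
                rwa [ht1.2] at h'
              rw [hvval, phiMap_val (hlt1 ξ), phiMap_val hξ,
                SeqNode.restrict_eq_self (le_of_eq ht1.2), hx]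
            have hbr : IsBranch (U i) (insert (phiMap κ (code i) (hc1 i) e x lam hlam) b) := by
              refine ⟨Set.insert_subset_iff.2 ⟨hwU, hbU⟩, ?_⟩
              intro s hs t ht
              rcases Set.mem_insert_iff.1 hs with rfl | hs' <;>
                rcases Set.mem_insert_iff.1 ht with h2 | ht'
              · rw [h2]; exact Or.inl (SeqNode.Init.rfl _)
              · exact Or.inr (hvw t ht')
              · rw [h2]; exact Or.inl (hvw s hs')
              · exact hblin s hs' t ht'
            have heq := hb.2 _ hbr (Set.subset_insert _ _)
            refine ⟨phiMap κ (code i) (hc1 i) e x lam hlam, ?_, rfl⟩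
            rw [← heq]
            exact Set.mem_insert _ _
    · -- perfect
      intro u hu
      obtain ⟨ζ, hζ, t, ⟨htT, htlen⟩, rfl⟩ := (hUmem i u).1 hu
      obtain ⟨s, hsT, v, hvT, hts, htv, hnsv, hnvs⟩ := hTperf i t htT
      have hmκ : max ζ (max s.len v.len) < κ.ord :=
        max_lt hζ (max_lt (hTlen i s hsT) (hTlen i v hvT))
      have hζ2 : max ζ (max s.len v.len) + 1 < κ.ord := hsuccκ _ hmκ
      have hslen : s.len ≤ e (max ζ (max s.len v.len) + 1) :=
        le_trans (le_trans ((le_max_left _ _).trans (le_max_right _ _))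
          (hlt1 _).le) (ege _ hζ2)
      have hvlen : v.len ≤ e (max ζ (max s.len v.len) + 1) :=
        le_trans (le_trans ((le_max_right _ _).trans (le_max_right _ _))
          (hlt1 _).le) (ege _ hζ2)
      obtain ⟨s₁, hs₁, hss₁⟩ := htext i s hsT _ (eκ _ hζ2) hslen
      obtain ⟨v₁, hv₁, hvv₁⟩ := htext i v hvT _ (eκ _ hζ2) hvlen
      have hne : s₁ ≠ v₁ := by
        rintro rfl
        rcases le_total s.len v.len with hl | hl
        · exact hnsv (SeqNode.init_of_init_init hss₁ hvv₁ hl)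
        · exact hnvs (SeqNode.init_of_init_init hvv₁ hss₁ hl)
      have hζle : ζ ≤ max ζ (max s.len v.len) + 1 := (le_max_left _ _).trans (hlt1 _).le
      have hwne : phiMap κ (code i) (hc1 i) e s₁ (max ζ (max s.len v.len) + 1) hζ2 ≠
          phiMap κ (code i) (hc1 i) e v₁ (max ζ (max s.len v.len) + 1) hζ2 := by
        intro heq
        have hval := congrArg (fun z : SeqNode κ => z.val (max ζ (max s.len v.len))) heq
        rw [phiMap_val (hlt1 _), phiMap_val (hlt1 _),
          SeqNode.restrict_eq_self (le_of_eq hs₁.2),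
          SeqNode.restrict_eq_self (le_of_eq hv₁.2)] at hval
        exact hne (hc2 i _ (eκ _ hζ2) hs₁ hv₁ hval)
      refine ⟨phiMap κ (code i) (hc1 i) e s₁ (max ζ (max s.len v.len) + 1) hζ2,
        (hΦmemU i s₁ _ hζ2 hs₁).1,
        phiMap κ (code i) (hc1 i) e v₁ (max ζ (max s.len v.len) + 1) hζ2,
        (hΦmemU i v₁ _ hζ2 hv₁).1,
        hΦinit i t s₁ ζ _ hζ hζ2 hζle htlen (hts.trans hss₁),
        hΦinit i t v₁ ζ _ hζ hζ2 hζle htlen (htv.trans hvv₁),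
        fun h => hwne (h.eq_of_le le_rfl),
        fun h => hwne ((h.eq_of_le le_rfl).symm)⟩
  -- decoding function
  have hdec0 : ∀ (i : Fin d) (u : SeqNode κ), ∃ t : SeqNode κ, u ∈ U i →
      t ∈ SeqLevel (T i) (e u.len) ∧ ∃ h : u.len < κ.ord,
        u = phiMap κ (code i) (hc1 i) e t u.len h := by
    intro i u
    by_cases hu : u ∈ U i
    · obtain ⟨ζ, hζ, t, htl, hlen', hueq⟩ := hUrep i u hu
      subst hlen'
      exact ⟨t, fun _ => ⟨htl, hζ, hueq⟩⟩
    · obtain ⟨t, _⟩ := hTne i (e 0) (eκ 0 hord0)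
      exact ⟨t, fun h => absurd h hu⟩
  choose dec hdec using hdec0
  -- apply SDHL to the compressed trees
  have hctil_lt : ∀ x ∈ LevelProd U, (fun x : Fin d → SeqNode κ =>
      c fun i => dec i (x i)) x < σ.ord := by
    intro x hx
    obtain ⟨α, hα⟩ := hx
    refine hc _ ⟨e α, fun i => ?_⟩
    have h1 := (hdec i (x i) (hα i).1).1
    rw [(hα i).2] at h1
    exact h1
  obtain ⟨X', hXU, ⟨α', β', hab, hbκ, t', ht', hmat⟩, hmono⟩ :=
    hSDHL U hUreg (fun x => c fun i => dec i (x i)) hctil_lt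
  have hακ : α' < κ.ord := hab.trans hbκ
  have hα1κ : α' + 1 < κ.ord := hsuccκ _ hακ
  have hα1β : α' + 1 ≤ β' := hsucclt _ _ hab
  refine ⟨e α', eA α' hακ, e β', eA β' hbκ, emono α' β' hab hbκ,
    fun i => dec i (t' i), ?_, fun i => dec i '' X' i, ?_, ?_⟩
  · intro i
    have h1 := (hdec i (t' i) (ht' i).1).1
    rw [(ht' i).2] at h1
    exact h1
  · intro i
    constructor
    · rintro x ⟨u, hu, rfl⟩
      have h1 := (hdec i u ((hmat i).1 hu).1).1
      rw [((hmat i).1 hu).2] at h1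
      exact h1
    · rintro y ⟨⟨hyT, hylen⟩, hyc⟩
      have hee : e α' + 1 ≤ e (α' + 1) := hsucclt _ _ (emono α' (α' + 1) (hlt1 α') hα1κ)
      obtain ⟨y', hy', hyy'⟩ := htext i y hyT (e (α' + 1)) (eκ _ hα1κ)
        (by rw [hylen]; exact hee)
      obtain ⟨htl, hκt, hteq⟩ := hdec i (t' i) (ht' i).1
      have hyU : phiMap κ (code i) (hc1 i) e y' (α' + 1) hα1κ ∈ SeqLevel (U i) (α' + 1) :=
        hΦmemU i y' (α' + 1) hα1κ hy'
      have htinit : (t' i).Init (phiMap κ (code i) (hc1 i) e y' (α' + 1) hα1κ) := by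
        have hi := hΦinit i (dec i (t' i)) y' (t' i).len (α' + 1) hκt hα1κ
          (by rw [(ht' i).2]; exact (hlt1 α').le) htl.2 (hyc.trans hyy')
        rw [← hteq] at hi
        exact hi
      obtain ⟨x', hx', hyx'⟩ := (hmat i).2 _ ⟨hyU, htinit⟩
      refine ⟨dec i x', ⟨x', hx', rfl⟩, ?_⟩
      obtain ⟨hxl, hκx, hxeq⟩ := hdec i x' ((hXU i) hx')
      have hx'len : x'.len = β' := ((hmat i).1 hx').2
      have hval := hyx'.2 α' (hlt1 α')
      rw [phiMap_val (hlt1 α'), SeqNode.restrict_eq_self (le_of_eq hy'.2), hxeq,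
        phiMap_val (show α' < x'.len by rw [hx'len]; exact hab)] at hval
      have hmem2 : (dec i x').restrict (e (α' + 1)) ∈ SeqLevel (T i) (e (α' + 1)) := by
        refine ⟨hrestrT i _ hxl.1 _, SeqNode.restrict_len ?_⟩
        rw [hxl.2, hx'len]
        exact emonole _ _ hα1β hbκ
      have hinj := hc2 i (e (α' + 1)) (eκ _ hα1κ) hy' hmem2 hval
      refine hyy'.trans ?_
      rw [hinj]
      exact SeqNode.restrict_init _ _
  · -- monochromatic
    intro x hx y hy
    obtain ⟨γx, hγx⟩ := hx
    obtain ⟨γy, hγy⟩ := hy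
    have hx' : ∀ i : Fin d, ∃ u, u ∈ X' i ∧ x i = dec i u := by
      intro i
      obtain ⟨u, hu, heq⟩ := (hγx i).1
      exact ⟨u, hu, heq.symm⟩
    have hy' : ∀ i : Fin d, ∃ u, u ∈ X' i ∧ y i = dec i u := by
      intro i
      obtain ⟨u, hu, heq⟩ := (hγy i).1
      exact ⟨u, hu, heq.symm⟩
    choose ux hux using hx'
    choose uy huy using hy'
    have h1 : ux ∈ LevelProd X' := ⟨β', fun i => ⟨(hux i).1, ((hmat i).1 (hux i).1).2⟩⟩
    have h2 : uy ∈ LevelProd X' := ⟨β', fun i => ⟨(huy i).1, ((hmat i).1 (huy i).1).2⟩⟩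
    have hmx := hmono ux h1 uy h2
    calc c x = c fun i => dec i (ux i) := congrArg c (funext fun i => (hux i).2)
      _ = c fun i => dec i (uy i) := hmx
      _ = c y := (congrArg c (funext fun i => (huy i).2)).symm
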